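/- In the same constructed PCMCA-WT instance, in any optimal feasible spanning arborescence: (a) no directed path starts at P_FAR and passes through a vertex of P; and (b) every leaf belonging to S has P_FAR as its parent; consequently, deleting all leaves attached through P_FAR yields a tree using only grid arcs A' whose leaves all lie in P, i.e., a feasible rectilinear Steiner arborescence, of total length at most the cost of the PCMCA-WT solution. -/

import Mathlib

def IsPathIn {V : Type*} (T : Set (V × V)) (r j : V) (p : List V) : Prop :=
  p.head? = some r ∧ p.getLast? = some j ∧ p.Chain' (fun a b => (a, b) ∈ T)

section Aux
variable {V : Type*}

theorem aux_rel_of_split {R : V → V → Prop} {l s t : List V} {a b : V}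
    (h : l.Chain' R) (e : l = s ++ a :: b :: t) : R a b := by
  subst e
  exact ((List.isChain_cons_cons.mp (List.isChain_append.mp h).2.1)).1

theorem aux_chain'_of_splits {R S : V → V → Prop} :
    ∀ l : List V, l.Chain' R → (∀ s t a b, l = s ++ a :: b :: t → S a b) → l.Chain' S := by
  intro l
  induction l with
  | nil => intro _ _; exact List.isChain_nil
  | cons a t ih =>
    intro hc hsp
    cases t with
    | nil => exact List.isChain_singleton a
    | cons b t' =>
      simp only [List.Chain', List.isChain_cons_cons] at hc ⊢
      refine ⟨hsp [] t' a b rfl, ih hc.2 ?_⟩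
      intro s t a' b' he
      exact hsp (a :: s) t a' b' (by simp [he])

theorem aux_last_of_no_out {R : V → V → Prop} {x : V} :
    ∀ l : List V, l.Chain' R → x ∈ l → (∀ y, ¬ R x y) →
      ∃ l', l = l' ++ [x] ∧ x ∉ l' := by
  intro l
  induction l with
  | nil => simp
  | cons a t ih =>
    intro hc hm hno
    cases t with
    | nil =>
      simp only [List.mem_singleton] at hm
      exact ⟨[], by simp [hm], by simp⟩
    | cons b t' =>
      simp only [List.Chain', List.isChain_cons_cons] at hc
      have hax : a ≠ x := by rintro rfl; exact hno b hc.1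
      have hm' : x ∈ b :: t' := by
        rcases List.mem_cons.mp hm with h | h
        · exact absurd h.symm hax
        · exact h
      obtain ⟨l', he, hn⟩ := ih hc.2 hm' hno
      refine ⟨a :: l', by simp [he], ?_⟩
      simp only [List.mem_cons, not_or]
      exact ⟨fun h => hax h.symm, hn⟩

theorem aux_head?_append_cons (s : List V) (x : V) (t : List V) :
    (s ++ x :: t).head? = (s ++ [x]).head? := by cases s <;> simp

theorem aux_head?_append_ne {l : List V} (l' : List V) (h : l ≠ []) :
    (l ++ l').head? = l.head? := by cases l <;> simp_all

theorem aux_mem_of_getLast? {l : List V} {x : V} (h : l.getLast? = some x) : x ∈ l := by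
  cases l with
  | nil => simp at h
  | cons a t =>
    rw [List.getLast?_eq_getLast (l := a :: t) (by simp)] at h
    have := List.getLast_mem (l := a :: t) (by simp)
    rwa [Option.some_inj.mp h] at this

end Aux

/-- converse direction of the RSA → PCMCA-WT reduction: in any
optimal feasible solution `(T', d, w)` of the constructed PCMCA-WT instance:
(a) no directed path starting at `P_FAR` passes through a vertex of `P` other than
`P_FAR` itself; (b) every leaf of `T'` that is a Steiner vertex has `P_FAR` as its
parent; consequently deleting the arcs leaving `P_FAR` yields a tree using only
grid arcs, spanning `P`, whose leaves all lie in `P` — a feasible rectilinear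
Steiner arborescence of total length at most the PCMCA-WT objective value. -/
theorem stmt11 (P : Finset (ℝ × ℝ)) (h0 : ((0 : ℝ), (0 : ℝ)) ∈ P)
    (hQ : ∀ q ∈ P, 0 ≤ q.1 ∧ 0 ≤ q.2)
    (PFAR : ℝ × ℝ) (hPF : PFAR ∈ P)
    (hFar : ∀ q ∈ P, q.1 + q.2 ≤ PFAR.1 + PFAR.2)
    (Grid : Finset (ℝ × ℝ))
    (hGrid : Grid = (P.image Prod.fst) ×ˢ (P.image Prod.snd))
    (A' : Finset ((ℝ × ℝ) × (ℝ × ℝ)))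
    (hA' : A' = (Grid ×ˢ Grid).filter (fun a =>
      (a.1.2 = a.2.2 ∧ a.1.1 < a.2.1 ∧ ¬ ∃ q ∈ Grid, a.1.1 < q.1 ∧ q.1 < a.2.1) ∨
      (a.1.1 = a.2.1 ∧ a.1.2 < a.2.2 ∧ ¬ ∃ q ∈ Grid, a.1.2 < q.2 ∧ q.2 < a.2.2)))
    (AFull : Finset ((ℝ × ℝ) × (ℝ × ℝ)))
    (hAFull : AFull = A' ∪ (Grid.filter (fun v => v ∉ P)).image (fun v => (PFAR, v)))
    (c : (ℝ × ℝ) × (ℝ × ℝ) → ℝ)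
    (hc : ∀ a, c a = if a.1 = PFAR ∧ a.2 ∉ P then 0
      else |a.2.1 - a.1.1| + |a.2.2 - a.1.2|)
    -- the feasible solution (T', d, w)
    (T' : Finset ((ℝ × ℝ) × (ℝ × ℝ))) (d w : ℝ × ℝ → ℝ)
    (hT'A : T' ⊆ AFull)
    (hdeg : ∀ j ∈ Grid, j ≠ ((0 : ℝ), (0 : ℝ)) → ∃! i : ℝ × ℝ, (i, j) ∈ T')
    (hroot : ∀ i : ℝ × ℝ, (i, ((0 : ℝ), (0 : ℝ))) ∉ T')
    (hpaths : ∀ j ∈ Grid, ∃! p : List (ℝ × ℝ), IsPathIn (↑T') ((0 : ℝ), (0 : ℝ)) j p)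
    (hd0 : d ((0 : ℝ), (0 : ℝ)) = 0)
    (hw0 : ∀ v, 0 ≤ w v)
    (htime : ∀ a ∈ T', d a.2 = d a.1 + c a + w a.2)
    (hprec : ∀ q ∈ P, d q ≤ d PFAR)
    -- optimality
    (hopt : ∀ (T2 : Finset ((ℝ × ℝ) × (ℝ × ℝ))) (d2 w2 : ℝ × ℝ → ℝ),
      T2 ⊆ AFull →
      (∀ j ∈ Grid, j ≠ ((0 : ℝ), (0 : ℝ)) → ∃! i : ℝ × ℝ, (i, j) ∈ T2) →
      (∀ i : ℝ × ℝ, (i, ((0 : ℝ), (0 : ℝ))) ∉ T2) →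
      (∀ j ∈ Grid, ∃! p : List (ℝ × ℝ), IsPathIn (↑T2) ((0 : ℝ), (0 : ℝ)) j p) →
      d2 ((0 : ℝ), (0 : ℝ)) = 0 → (∀ v, 0 ≤ w2 v) →
      (∀ a ∈ T2, d2 a.2 = d2 a.1 + c a + w2 a.2) →
      (∀ q ∈ P, d2 q ≤ d2 PFAR) →
      ∑ a ∈ T', c a + ∑ v ∈ Grid, w v ≤ ∑ a ∈ T2, c a + ∑ v ∈ Grid, w2 v) :
    -- (a)
    (∀ (v : ℝ × ℝ) (p : List (ℝ × ℝ)), IsPathIn (↑T') PFAR v p →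
      ∀ q ∈ p, q ∈ P → q = PFAR) ∧
    -- (b)
    (∀ v ∈ Grid, v ∉ P → (∃ u, (u, v) ∈ T') → (∀ u, (v, u) ∉ T') → (PFAR, v) ∈ T') ∧
    -- consequence: the pruned tree is a feasible RSA of length ≤ the objective
    ((T'.filter (fun a => a.1 ≠ PFAR)) ⊆ A' ∧
      (∀ q ∈ P, ∃! p : List (ℝ × ℝ),
        IsPathIn (↑(T'.filter (fun a => a.1 ≠ PFAR))) ((0 : ℝ), (0 : ℝ)) q p) ∧
      (∀ v : ℝ × ℝ, (∃ u, (u, v) ∈ T'.filter (fun a => a.1 ≠ PFAR)) →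
        (∀ u, (v, u) ∉ T'.filter (fun a => a.1 ≠ PFAR)) → v ∈ P) ∧
      ∑ a ∈ T'.filter (fun a => a.1 ≠ PFAR), (|a.2.1 - a.1.1| + |a.2.2 - a.1.2|) ≤
        ∑ a ∈ T', c a + ∑ v ∈ Grid, w v) := by
  classical
  -- basic facts
  have hGmem : ∀ q ∈ P, q ∈ Grid := by
    intro q hq
    rw [hGrid, Finset.mem_product]
    exact ⟨Finset.mem_image.mpr ⟨q, hq, rfl⟩, Finset.mem_image.mpr ⟨q, hq, rfl⟩⟩
  have hzero : ((0 : ℝ), (0 : ℝ)) ∈ Grid := hGmem _ h0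
  have hPFG : PFAR ∈ Grid := hGmem _ hPF
  have hcnn : ∀ a, 0 ≤ c a := by
    intro a; rw [hc]; split
    · exact le_refl 0
    · positivity
  have hA'grid : ∀ a ∈ A', a.1 ∈ Grid ∧ a.2 ∈ Grid := by
    intro a ha; rw [hA'] at ha
    exact Finset.mem_product.mp (Finset.mem_filter.mp ha).1
  have hA'pos : ∀ a ∈ A', 0 < |a.2.1 - a.1.1| + |a.2.2 - a.1.2| := by
    intro a ha; rw [hA', Finset.mem_filter] at ha
    rcases ha.2 with ⟨_, hlt, _⟩ | ⟨_, hlt, _⟩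
    · have h1 : 0 < |a.2.1 - a.1.1| := abs_pos.mpr (by intro h; linarith [sub_eq_zero.mp h])
      have h2 : 0 ≤ |a.2.2 - a.1.2| := abs_nonneg _
      linarith
    · have h1 : 0 < |a.2.2 - a.1.2| := abs_pos.mpr (by intro h; linarith [sub_eq_zero.mp h])
      have h2 : 0 ≤ |a.2.1 - a.1.1| := abs_nonneg _
      linarith
  have hsplitT : ∀ a ∈ T', a ∈ A' ∨ (a.1 = PFAR ∧ a.2 ∉ P ∧ a.2 ∈ Grid) := by
    intro a ha
    have h := hT'A ha; rw [hAFull, Finset.mem_union] at h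
    rcases h with h | h
    · exact Or.inl h
    · right
      obtain ⟨v, hv, hev⟩ := Finset.mem_image.mp h
      obtain ⟨hvG, hvP⟩ := Finset.mem_filter.mp hv
      rw [← hev]; exact ⟨rfl, hvP, hvG⟩
  -- d is monotone along chains
  have mono : ∀ l : List (ℝ × ℝ),
      l.Chain' (fun a b => (a, b) ∈ (↑T' : Set ((ℝ × ℝ) × (ℝ × ℝ)))) →
      ∀ x ∈ l.head?, ∀ y ∈ l.getLast?, d x ≤ d y := by
    intro l
    induction l with
    | nil => simp
    | cons a t ih =>
      intro hch x hx y hy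
      cases t with
      | nil =>
        simp only [List.head?_cons, List.getLast?_singleton, Option.mem_def,
          Option.some_inj] at hx hy
        rw [← hx, ← hy]
      | cons b t' =>
        simp only [List.Chain', List.isChain_cons_cons] at hch
        have h1 : d a ≤ d b := by
          have ht := htime (a, b) (Finset.mem_coe.mp hch.1)
          have h2 := hcnn (a, b); have h3 := hw0 b
          simp only at ht; linarith
        have h2 := ih hch.2 b (by simp) y (by simpa using hy)
        simp only [List.head?_cons, Option.mem_def, Option.some_inj] at hx
        rw [← hx]; linarith
  -- part (a)
  have parta : ∀ (v : ℝ × ℝ) (p : List (ℝ × ℝ)), IsPathIn (↑T') PFAR v p →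
      ∀ q ∈ p, q ∈ P → q = PFAR := by
    intro v p hp q hq hqP
    obtain ⟨hh, hl, hch⟩ := hp
    obtain ⟨s, t, rfl⟩ := List.append_of_mem hq
    rcases eq_or_ne s [] with rfl | hs
    · simp only [List.nil_append, List.head?_cons, Option.some_inj] at hh
      exact hh
    · exfalso
      have hsp := List.isChain_append.mp hch
      have hul : s.getLast? = some (s.getLast hs) := List.getLast?_eq_getLast hs
      set u := s.getLast hs with hu
      have harc : (u, q) ∈ T' := Finset.mem_coe.mp (hsp.2.2 u hul q rfl)
      have hhead_s : s.head? = some PFAR := by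
        cases s with
        | nil => exact absurd rfl hs
        | cons a s' => simpa using hh
      have hdu : d PFAR ≤ d u := mono s hsp.1 PFAR hhead_s u hul
      have hqA : (u, q) ∈ A' := by
        rcases hsplitT (u, q) harc with h | ⟨_, h2, _⟩
        · exact h
        · exact absurd hqP h2
      have hcq : 0 < c (u, q) := by
        rw [hc, if_neg (fun h => h.2 hqP)]
        exact hA'pos _ hqA
      have ht := htime (u, q) harc
      have hp2 := hprec q hqP
      have hw := hw0 q
      simp only at ht
      linarith
  -- part (b)
  have partb : ∀ v ∈ Grid, v ∉ P → (∃ u, (u, v) ∈ T') → (∀ u, (v, u) ∉ T') →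
      (PFAR, v) ∈ T' := by
    intro v hvG hvP hex hleaf
    obtain ⟨u, huv⟩ := hex
    by_contra hnot
    have hune : u ≠ PFAR := by rintro rfl; exact hnot huv
    have hv0 : v ≠ ((0 : ℝ), (0 : ℝ)) := by rintro rfl; exact hvP h0
    have hvPF : v ≠ PFAR := by rintro rfl; exact hvP hPF
    have huvA : (u, v) ∈ A' := by
      rcases hsplitT (u, v) huv with h | ⟨h1, _, _⟩
      · exact h
      · exact absurd h1 hune
    have hcuv : 0 < c (u, v) := by
      rw [hc, if_neg (fun h => hune h.1)]
      exact hA'pos _ huvA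
    have hupred : ∀ i, (i, v) ∈ T' → i = u := by
      intro i hi
      obtain ⟨i0, _, hun⟩ := hdeg v hvG hv0
      rw [hun i hi, hun u huv]
    set T2 : Finset ((ℝ × ℝ) × (ℝ × ℝ)) := insert (PFAR, v) (T'.erase (u, v)) with hT2
    have hv_in2 : (PFAR, v) ∈ T2 := Finset.mem_insert_self _ _
    have hin2 : ∀ a ∈ T', a.2 ≠ v → a ∈ T2 := by
      intro a ha h2
      exact Finset.mem_insert_of_mem (Finset.mem_erase.mpr
        ⟨fun he => h2 (by rw [he]), ha⟩)
    have hout2 : ∀ a ∈ T2, a.2 ≠ v → a ∈ T' := by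
      intro a ha h2
      rcases Finset.mem_insert.mp ha with rfl | h
      · exact absurd rfl h2
      · exact Finset.mem_of_mem_erase h
    have hT2nooutv : ∀ x, (v, x) ∉ T2 := by
      intro x hx
      rcases Finset.mem_insert.mp hx with h | h
      · exact hvPF (congrArg Prod.fst h)
      · exact hleaf x (Finset.mem_of_mem_erase h)
    have hT2predv : ∀ i, (i, v) ∈ T2 → i = PFAR := by
      intro i hi
      rcases Finset.mem_insert.mp hi with h | h
      · exact congrArg Prod.fst h
      · exfalso
        have hT := Finset.mem_of_mem_erase h
        have := hupred i hT
        exact (Finset.mem_erase.mp h).1 (by rw [this])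
    have chain12 : ∀ l : List (ℝ × ℝ), v ∉ l →
        l.Chain' (fun a b => (a, b) ∈ (↑T' : Set ((ℝ × ℝ) × (ℝ × ℝ)))) →
        l.Chain' (fun a b => (a, b) ∈ (↑T2 : Set ((ℝ × ℝ) × (ℝ × ℝ)))) := by
      intro l hvl hch
      refine aux_chain'_of_splits l hch ?_
      intro s t a b he
      have hrel := aux_rel_of_split hch he
      have hbv : b ≠ v := by rintro rfl; exact hvl (by simp [he])
      exact Finset.mem_coe.mpr (hin2 _ (Finset.mem_coe.mp hrel) hbv)
    have chain21 : ∀ l : List (ℝ × ℝ), v ∉ l →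
        l.Chain' (fun a b => (a, b) ∈ (↑T2 : Set ((ℝ × ℝ) × (ℝ × ℝ)))) →
        l.Chain' (fun a b => (a, b) ∈ (↑T' : Set ((ℝ × ℝ) × (ℝ × ℝ)))) := by
      intro l hvl hch
      refine aux_chain'_of_splits l hch ?_
      intro s t a b he
      have hrel := aux_rel_of_split hch he
      have hbv : b ≠ v := by rintro rfl; exact hvl (by simp [he])
      exact Finset.mem_coe.mpr (hout2 _ (Finset.mem_coe.mp hrel) hbv)
    have hTpath_mem : ∀ j (p : List (ℝ × ℝ)),
        IsPathIn (↑T') ((0 : ℝ), (0 : ℝ)) j p → v ∈ p → j = v := by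
      rintro j p ⟨hh, hl, hch⟩ hm
      obtain ⟨l', he, _⟩ := aux_last_of_no_out p hch hm
        (fun y hy => hleaf y (Finset.mem_coe.mp hy))
      rw [he, List.getLast?_concat] at hl
      exact (Option.some_inj.mp hl).symm
    have hT2path_mem : ∀ j (p : List (ℝ × ℝ)),
        IsPathIn (↑T2) ((0 : ℝ), (0 : ℝ)) j p → v ∈ p → j = v := by
      rintro j p ⟨hh, hl, hch⟩ hm
      obtain ⟨l', he, _⟩ := aux_last_of_no_out p hch hm
        (fun y hy => hT2nooutv y (Finset.mem_coe.mp hy))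
      rw [he, List.getLast?_concat] at hl
      exact (Option.some_inj.mp hl).symm
    have hT2A : T2 ⊆ AFull := by
      intro a ha
      rcases Finset.mem_insert.mp ha with rfl | h
      · rw [hAFull]
        exact Finset.mem_union_right _ (Finset.mem_image.mpr
          ⟨v, Finset.mem_filter.mpr ⟨hvG, hvP⟩, rfl⟩)
      · exact hT'A (Finset.mem_of_mem_erase h)
    have hdeg2 : ∀ j ∈ Grid, j ≠ ((0 : ℝ), (0 : ℝ)) → ∃! i : ℝ × ℝ, (i, j) ∈ T2 := by
      intro j hj hj0
      rcases eq_or_ne j v with rfl | hjv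
      · exact ⟨PFAR, hv_in2, fun i hi => hT2predv i hi⟩
      · obtain ⟨i, hi, hun⟩ := hdeg j hj hj0
        exact ⟨i, hin2 _ hi hjv, fun i' hi' => hun i' (hout2 _ hi' hjv)⟩
    have hroot2 : ∀ i : ℝ × ℝ, (i, ((0 : ℝ), (0 : ℝ))) ∉ T2 := by
      intro i hi
      rcases Finset.mem_insert.mp hi with h | h
      · exact hv0 (congrArg Prod.snd h).symm
      · exact hroot i (Finset.mem_of_mem_erase h)
    obtain ⟨p0, hp0, hp0u⟩ := hpaths PFAR hPFG
    have hvp0 : v ∉ p0 := fun hm => hvPF (hTpath_mem PFAR p0 hp0 hm).symm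
    have hp0ne : p0 ≠ [] := by
      intro h; rw [h] at hp0; exact absurd hp0.1 (by simp)
    have hpaths2 : ∀ j ∈ Grid, ∃! p : List (ℝ × ℝ),
        IsPathIn (↑T2) ((0 : ℝ), (0 : ℝ)) j p := by
      intro j hj
      rcases eq_or_ne j v with hjv | hjv
      · rw [hjv]
        refine ⟨p0 ++ [v], ⟨?_, List.getLast?_concat, ?_⟩, ?_⟩
        · rw [aux_head?_append_ne _ hp0ne]; exact hp0.1
        · refine List.isChain_append.mpr
            ⟨chain12 _ hvp0 hp0.2.2, List.isChain_singleton v, ?_⟩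
          intro x hx y hy
          simp only [List.head?_cons, Option.mem_def, Option.some_inj] at hy
          rw [Option.mem_def, hp0.2.1, Option.some_inj] at hx
          rw [← hx, ← hy]
          exact Finset.mem_coe.mpr hv_in2
        · rintro q ⟨hqh, hql, hqc⟩
          have hvq : v ∈ q := aux_mem_of_getLast? hql
          obtain ⟨q', he, hnq⟩ := aux_last_of_no_out q hqc hvq
            (fun y hy => hT2nooutv y (Finset.mem_coe.mp hy))
          subst he
          have hq'ne : q' ≠ [] := by
            rintro rfl
            simp only [List.nil_append, List.head?_cons, Option.some_inj] at hqh
            exact hv0 hqh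
          have hcs := List.isChain_append.mp hqc
          have hlast' : q'.getLast? = some (q'.getLast hq'ne) :=
            List.getLast?_eq_getLast _
          have harc2 : (q'.getLast hq'ne, v) ∈ T2 :=
            Finset.mem_coe.mp (hcs.2.2 _ hlast' v rfl)
          have hPF' : q'.getLast hq'ne = PFAR := hT2predv _ harc2
          have hq'path : IsPathIn (↑T') ((0 : ℝ), (0 : ℝ)) PFAR q' := by
            refine ⟨?_, by rw [hlast', hPF'], chain21 _ hnq hcs.1⟩
            rw [aux_head?_append_ne _ hq'ne] at hqh; exact hqh
          rw [hp0u q' hq'path]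
      · obtain ⟨p, hp, hpu⟩ := hpaths j hj
        have hvp : v ∉ p := fun hm => hjv (hTpath_mem j p hp hm)
        refine ⟨p, ⟨hp.1, hp.2.1, chain12 _ hvp hp.2.2⟩, ?_⟩
        rintro q hq
        have hvq : v ∉ q := fun hm => hjv (hT2path_mem j q hq hm)
        exact hpu q ⟨hq.1, hq.2.1, chain21 _ hvq hq.2.2⟩
    set d2 : ℝ × ℝ → ℝ := fun x => if x = v then d PFAR else d x with hd2
    set w2 : ℝ × ℝ → ℝ := fun x => if x = v then 0 else w x with hw2
    have hd20 : d2 ((0 : ℝ), (0 : ℝ)) = 0 := by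
      rw [hd2]; simp only [if_neg (fun h => hv0 (Eq.symm h))]; exact hd0
    have hw20 : ∀ x, 0 ≤ w2 x := by
      intro x; rw [hw2]; dsimp only; split
      · exact le_refl 0
      · exact hw0 x
    have htime2 : ∀ a ∈ T2, d2 a.2 = d2 a.1 + c a + w2 a.2 := by
      intro a ha
      rcases Finset.mem_insert.mp ha with rfl | h
      · show d2 v = d2 PFAR + c (PFAR, v) + w2 v
        have hc0 : c (PFAR, v) = 0 := by rw [hc]; exact if_pos ⟨rfl, hvP⟩
        simp only [hd2, hw2]
        simp [hc0, Ne.symm hvPF]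
      · have haT : a ∈ T' := Finset.mem_of_mem_erase h
        have hane : a ≠ (u, v) := (Finset.mem_erase.mp h).1
        have ha2 : a.2 ≠ v := by
          intro h2
          apply hane
          have hm : (a.1, a.2) ∈ T' := haT
          rw [h2] at hm
          exact Prod.ext (hupred a.1 hm) h2
        have ha1 : a.1 ≠ v := by
          intro h1
          have hm : (a.1, a.2) ∈ T' := haT
          rw [h1] at hm
          exact hleaf a.2 hm
        simp only [hd2, hw2]
        rw [if_neg ha2, if_neg ha1, if_neg ha2]
        exact htime a haT
    have hprec2 : ∀ q ∈ P, d2 q ≤ d2 PFAR := by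
      intro q hq
      simp only [hd2]
      rw [if_neg (fun h => hvP (by rw [← h]; exact hq)), if_neg (fun h => hvPF h.symm)]
      exact hprec q hq
    have hsum2 : ∑ a ∈ T2, c a = ∑ a ∈ T', c a - c (u, v) := by
      rw [hT2, Finset.sum_insert (fun h => hnot (Finset.mem_of_mem_erase h))]
      have hse := Finset.sum_erase_add T' c huv
      have hc0 : c (PFAR, v) = 0 := by rw [hc]; exact if_pos ⟨rfl, hvP⟩
      linarith
    have hsumw : ∑ x ∈ Grid, w2 x ≤ ∑ x ∈ Grid, w x := by
      apply Finset.sum_le_sum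
      intro x hx
      rw [hw2]; dsimp only; split
      · exact hw0 x
      · exact le_refl _
    have hfin := hopt T2 d2 w2 hT2A hdeg2 hroot2 hpaths2 hd20 hw20 htime2 hprec2
    linarith
  -- consequences
  have hsub : (T'.filter (fun a => a.1 ≠ PFAR)) ⊆ A' := by
    intro a ha
    obtain ⟨haT, hane⟩ := Finset.mem_filter.mp ha
    rcases hsplitT a haT with h | ⟨h1, _, _⟩
    · exact h
    · exact absurd h1 hane
  refine ⟨parta, partb, hsub, ?_, ?_, ?_⟩
  · -- paths in the pruned tree
    intro q hq
    obtain ⟨p, hp, hpu⟩ := hpaths q (hGmem q hq)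
    have hchain'' : p.Chain' (fun a b =>
        (a, b) ∈ (↑(T'.filter (fun a => a.1 ≠ PFAR)) : Set ((ℝ × ℝ) × (ℝ × ℝ)))) := by
      refine aux_chain'_of_splits p hp.2.2 ?_
      intro s t a b he
      have hrel : (a, b) ∈ T' := Finset.mem_coe.mp (aux_rel_of_split hp.2.2 he)
      refine Finset.mem_coe.mpr (Finset.mem_filter.mpr ⟨hrel, ?_⟩)
      intro haPF
      replace haPF : a = PFAR := haPF
      -- suffix is a path from PFAR to q
      have hne2 : (a :: b :: t) ≠ ([] : List (ℝ × ℝ)) := by simp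
      have hlastq : (a :: b :: t).getLast? = some q := by
        have hgl := hp.2.1
        rw [he, List.getLast?_append,
          List.getLast?_eq_getLast hne2] at hgl
        rw [show ∀ (x : ℝ × ℝ) (o : Option (ℝ × ℝ)), (some x).or o = some x
          from fun _ _ => rfl] at hgl
        rw [List.getLast?_eq_getLast hne2]; exact hgl
      have hsuf : IsPathIn (↑T') PFAR q (a :: b :: t) := by
        refine ⟨by rw [List.head?_cons, haPF], hlastq, ?_⟩
        have hcc := hp.2.2
        rw [he] at hcc
        exact (List.isChain_append.mp hcc).2.1
      have hqPF : q = PFAR := parta q _ hsuf q (aux_mem_of_getLast? hlastq) hq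
      have hpre : IsPathIn (↑T') ((0 : ℝ), (0 : ℝ)) PFAR (s ++ [a]) := by
        refine ⟨?_, by rw [List.getLast?_concat, haPF], ?_⟩
        · rw [← aux_head?_append_cons s a (b :: t), ← he]; exact hp.1
        · have he2 : p = (s ++ [a]) ++ (b :: t) := by simp [he]
          have hcc := hp.2.2
          rw [he2] at hcc
          exact (List.isChain_append.mp hcc).1
      have hpPF : IsPathIn (↑T') ((0 : ℝ), (0 : ℝ)) PFAR p :=
        ⟨hp.1, hqPF ▸ hp.2.1, hp.2.2⟩
      obtain ⟨pp, _, ppu⟩ := hpaths PFAR hPFG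
      have he1 := ppu _ hpPF
      have he2' := ppu _ hpre
      have heq : s ++ a :: b :: t = s ++ [a] := by rw [← he, he1, he2']
      have hlen := congrArg List.length heq
      simp at hlen
    refine ⟨p, ⟨hp.1, hp.2.1, hchain''⟩, ?_⟩
    rintro y ⟨hyh, hyl, hyc⟩
    refine hpu y ⟨hyh, hyl, hyc.imp ?_⟩
    intro a b hab
    exact Finset.mem_coe.mpr (Finset.filter_subset _ _ (Finset.mem_coe.mp hab))
  · -- leaves lie in P
    rintro v ⟨u0, hu0⟩ hnout
    by_contra hvP
    obtain ⟨hu0T, hu0ne⟩ := Finset.mem_filter.mp hu0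
    have hvG : v ∈ Grid := (hA'grid _ (hsub hu0)).2
    have hvPF : v ≠ PFAR := by rintro rfl; exact hvP hPF
    have hleaf : ∀ x, (v, x) ∉ T' := by
      intro x hx
      exact hnout x (Finset.mem_filter.mpr ⟨hx, hvPF⟩)
    have hbv := partb v hvG hvP ⟨u0, hu0T⟩ hleaf
    have hv0 : v ≠ ((0 : ℝ), (0 : ℝ)) := by rintro rfl; exact hvP h0
    obtain ⟨i, _, hun⟩ := hdeg v hvG hv0
    have h1 := hun _ hbv
    have h2 := hun _ hu0T
    exact hu0ne (by rw [h2, ← h1])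
  · -- total length bound
    have h1 : ∑ a ∈ T'.filter (fun a => a.1 ≠ PFAR),
        (|a.2.1 - a.1.1| + |a.2.2 - a.1.2|) = ∑ a ∈ T'.filter (fun a => a.1 ≠ PFAR), c a := by
      refine Finset.sum_congr rfl ?_
      intro a ha
      obtain ⟨_, hane⟩ := Finset.mem_filter.mp ha
      rw [hc, if_neg (fun h => hane h.1)]
    have h2 : ∑ a ∈ T'.filter (fun a => a.1 ≠ PFAR), c a ≤ ∑ a ∈ T', c a :=
      Finset.sum_le_sum_of_subset_of_nonneg (Finset.filter_subset _ _)
        (fun a _ _ => hcnn a)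
    have h3 : 0 ≤ ∑ x ∈ Grid, w x := Finset.sum_nonneg (fun x _ => hw0 x)
    linarith
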